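/- Let C_1,…,C_m (m ≥ 2) be real full-row-rank matrices with n columns, K_i = kernel(C_i), P_i = C_iᵀ(C_iC_iᵀ)^{−1}C_i, and let M be the mn×mn block matrix whose i-th diagonal block is I_n − (1/2)P_i, whose (i, i−1) block (indices mod m) is (1/2)P_i, and whose remaining blocks are zero. If the weighted m-vertex directed cycle is well-configured (equivalently, the family {K_i : i ∈ {1,…,m}, K_i ≠ {0}} is independent), then the fixed point set {x ∈ ℝ^{mn} : Mx = x} equals span(Ī), the set of vectors whose m blocks in ℝ^n are all equal. -/

import Mathlib

open Matrix

/-- The `mn × mn` stacked update matrix of the cycle iteration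
`x i (t+1) = x i t − (1/2) P i (x i t − x (i-1) t)` (indices mod `m`): its `i`-th diagonal
block is `I − (1/2) P i`, its `(i, i-1)` block is `(1/2) P i`, and all other blocks vanish. -/
noncomputable def cycM (m n : ℕ) [NeZero m] (P : Fin m → Matrix (Fin n) (Fin n) ℝ) :
    Matrix (Fin m × Fin n) (Fin m × Fin n) ℝ :=
  Matrix.of fun p q =>
    (if q.1 = p.1 then ((1 : Matrix (Fin n) (Fin n) ℝ) - (1 / 2 : ℝ) • P p.1) p.2 q.2 else 0) +
    (if q.1 = p.1 - 1 then ((1 / 2 : ℝ) • P p.1) p.2 q.2 else 0)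

lemma aux_isUnit_of_rank {k : ℕ} (B : Matrix (Fin k) (Fin k) ℝ) (h : B.rank = k) : IsUnit B := by
  rw [← mulVec_surjective_iff_isUnit]
  have : LinearMap.range B.mulVecLin = ⊤ :=
    Submodule.eq_top_of_finrank_eq (by simpa [Matrix.rank] using h)
  have := LinearMap.range_eq_top.mp this
  simpa [Matrix.coe_mulVecLin] using this

lemma aux_P_ker {k n : ℕ} (C : Matrix (Fin k) (Fin n) ℝ) (hU : IsUnit (C * Cᵀ))
    (v : Fin n → ℝ) : (Cᵀ * (C * Cᵀ)⁻¹ * C).mulVec v = 0 ↔ C.mulVec v = 0 := by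
  constructor
  · intro h
    have h2 : (C * (Cᵀ * (C * Cᵀ)⁻¹ * C)).mulVec v = 0 := by
      rw [← mulVec_mulVec, h, mulVec_zero]
    have : C * (Cᵀ * (C * Cᵀ)⁻¹ * C) = C := by
      rw [← Matrix.mul_assoc, ← Matrix.mul_assoc,
        Matrix.mul_nonsing_inv _ ((isUnit_iff_isUnit_det _).mp hU), Matrix.one_mul]
    rwa [this] at h2
  · intro h
    rw [Matrix.mul_assoc, ← mulVec_mulVec, ← mulVec_mulVec, h, mulVec_zero, mulVec_zero]

lemma cycM_mulVec (m n : ℕ) [NeZero m] (P : Fin m → Matrix (Fin n) (Fin n) ℝ)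
    (x : Fin m × Fin n → ℝ) (p : Fin m × Fin n) :
    (cycM m n P).mulVec x p =
      ((1 - (1/2:ℝ) • P p.1).mulVec (fun j => x (p.1, j))) p.2 +
      (((1/2:ℝ) • P p.1).mulVec (fun j => x (p.1 - 1, j))) p.2 := by
  simp only [cycM, Matrix.mulVec, dotProduct, Matrix.of_apply, Fintype.sum_prod_type,
    add_mul, Finset.sum_add_distrib, ite_mul, zero_mul]
  congr 1
  · rw [Finset.sum_comm]
    simp [Finset.sum_ite_eq]
  · rw [Finset.sum_comm]
    simp [Finset.sum_ite_eq]

/-- For full-row-rank matrices `C i` with `n` columns, `Pᵢ = Cᵢᵀ(CᵢCᵢᵀ)⁻¹Cᵢ` and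
the corresponding cycle update matrix `M`, if the weighted cycle is well-configured, then the
fixed point set `{x : M x = x}` is exactly `span Ī`, the set of stacked vectors whose `m`
blocks in `ℝⁿ` are all equal. -/
theorem stmt_17 (m n : ℕ) [NeZero m] (hm : 2 ≤ m) (k : Fin m → ℕ)
    (C : (i : Fin m) → Matrix (Fin (k i)) (Fin n) ℝ)
    (hrank : ∀ i, (C i).rank = k i)
    (hwc : ∀ y : Fin m → (Fin n → ℝ),
      (∀ i : Fin m, (C i).mulVec (y i - y (i - 1)) = 0) → ∀ i j, y i = y j) :
    ∀ x : Fin m × Fin n → ℝ,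
      (cycM m n fun i => (C i)ᵀ * (C i * (C i)ᵀ)⁻¹ * C i).mulVec x = x ↔
        ∃ z : Fin n → ℝ, ∀ p : Fin m × Fin n, x p = z p.2 := by

  intro x
  set P : Fin m → Matrix (Fin n) (Fin n) ℝ := fun i => (C i)ᵀ * (C i * (C i)ᵀ)⁻¹ * C i with hP
  set y : Fin m → Fin n → ℝ := fun i j => x (i, j) with hy
  have hU : ∀ i, IsUnit (C i * (C i)ᵀ) := fun i =>
    aux_isUnit_of_rank _ (by rw [rank_self_mul_transpose, hrank])
  constructor
  · intro h
    have hker : ∀ i, (P i).mulVec (y i - y (i - 1)) = 0 := by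
      intro i
      funext j
      have h2 := congrFun h (i, j)
      rw [cycM_mulVec] at h2
      simp only [sub_mulVec, one_mulVec, Pi.sub_apply, smul_mulVec, Pi.smul_apply,
        smul_eq_mul, mulVec_sub, Pi.zero_apply] at h2 ⊢
      simp only [hy] at h2 ⊢
      linarith
    have hC : ∀ i, (C i).mulVec (y i - y (i - 1)) = 0 :=
      fun i => (aux_P_ker (C i) (hU i) _).mp (hker i)
    exact ⟨y 0, fun p => congrFun (hwc y hC p.1 0) p.2⟩
  · rintro ⟨z, hz⟩
    funext p
    rw [cycM_mulVec]
    have e1 : (fun j => x (p.1, j)) = z := funext fun j => hz (p.1, j)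
    have e2 : (fun j => x (p.1 - 1, j)) = z := funext fun j => hz (p.1 - 1, j)
    rw [e1, e2, sub_mulVec, one_mulVec, hz p]
    simp
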